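/- Let $(\Omega, \mathcal{F}, P)$ be a probability space and $\xi$ an integrable random variable with $0 < P(\xi > 0) < 1$ and $0 < P(\xi < 0)$. Set $\Omega^+ = \{\xi > 0\}$, $\Omega^- = \{\xi \le 0\}$, $\xi^\pm$ the positive/negative parts, and $\mu = P^- \times P^+$ the product of the restrictions of $P$. Then a probability measure $Q$ equivalent to $P$ satisfies $E^Q \xi = 0$ if and only if $Q$ has the representation $Q(A) = \int_{\Omega^-}\int_{\Omega^+} \left[\chi_A(\omega_1) \frac{\xi^+(\omega_2)}{\xi^-(\omega_1)+\xi^+(\omega_2)} + \chi_A(\omega_2) \frac{\xi^-(\omega_1)}{\xi^-(\omega_1)+\xi^+(\omega_2)}\right] \alpha(\omega_1, \omega_2) \, d\mu(\omega_1, \omega_2)$ for some nonnegative measurable $\alpha$ on $\Omega^- \times \Omega^+$ with $\mu(\alpha > 0) = P(\Omega^+)P(\Omega^-)$, $\int \alpha \frac{\xi^- \xi^+}{\xi^- + \xi^+} d\mu < \infty$, and $\int \alpha \, d\mu = 1$. -/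

import Mathlib

open MeasureTheory Filter

noncomputable def xiPos {Ω : Type*} (ξ : Ω → ℝ) (ω : Ω) : ℝ := max (ξ ω) 0

noncomputable def xiNeg {Ω : Type*} (ξ : Ω → ℝ) (ω : Ω) : ℝ := max (-ξ ω) 0

/-- The product `μ = P⁻ × P⁺` of the restrictions of `P` to `Ω⁻ = {ξ ≤ 0}` and
`Ω⁺ = {ξ > 0}`. -/
noncomputable def prodMeas {Ω : Type*} [MeasurableSpace Ω] (P : Measure Ω) (ξ : Ω → ℝ) :
    Measure (Ω × Ω) :=
  (P.restrict {ω | ξ ω ≤ 0}).prod (P.restrict {ω | 0 < ξ ω})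

/-- The kernel `χ_S(ω₁) ξ⁺(ω₂)/(ξ⁻(ω₁)+ξ⁺(ω₂)) + χ_S(ω₂) ξ⁻(ω₁)/(ξ⁻(ω₁)+ξ⁺(ω₂))`. -/
noncomputable def kern {Ω : Type*} (ξ : Ω → ℝ) (S : Set Ω) (p : Ω × Ω) : ℝ :=
  Set.indicator S (fun _ => (1 : ℝ)) p.1 * (xiPos ξ p.2 / (xiNeg ξ p.1 + xiPos ξ p.2)) +
  Set.indicator S (fun _ => (1 : ℝ)) p.2 * (xiNeg ξ p.1 / (xiNeg ξ p.1 + xiPos ξ p.2))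

/-- The admissibility conditions on the weight `α`. -/
def GoodAlpha {Ω : Type*} [MeasurableSpace Ω] (P : Measure Ω) (ξ : Ω → ℝ)
    (α : Ω × Ω → ℝ) : Prop :=
  Measurable α ∧ (∀ p, 0 ≤ α p) ∧
  prodMeas P ξ {p | 0 < α p} = P {ω | 0 < ξ ω} * P {ω | ξ ω ≤ 0} ∧
  Integrable (fun p => α p * (xiNeg ξ p.1 * xiPos ξ p.2 / (xiNeg ξ p.1 + xiPos ξ p.2)))
    (prodMeas P ξ) ∧
  ∫ p, α p ∂(prodMeas P ξ) = 1


open scoped ENNReal NNReal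

section Aux

variable {Ω : Type*} {ξ : Ω → ℝ} {ω : Ω}

lemma xiPos_nonneg (ξ : Ω → ℝ) (ω : Ω) : 0 ≤ xiPos ξ ω := le_max_right _ _
lemma xiNeg_nonneg (ξ : Ω → ℝ) (ω : Ω) : 0 ≤ xiNeg ξ ω := le_max_right _ _

lemma xiPos_of_nonpos (h : ξ ω ≤ 0) : xiPos ξ ω = 0 := max_eq_right h
lemma xiNeg_of_nonpos (h : ξ ω ≤ 0) : xiNeg ξ ω = -ξ ω := max_eq_left (neg_nonneg.2 h)
lemma xiPos_of_pos (h : 0 < ξ ω) : xiPos ξ ω = ξ ω := max_eq_left h.le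
lemma xiNeg_of_pos (h : 0 < ξ ω) : xiNeg ξ ω = 0 := max_eq_right (neg_nonpos.2 h.le)

lemma xiPos_sub_xiNeg (ξ : Ω → ℝ) (ω : Ω) : xiPos ξ ω - xiNeg ξ ω = ξ ω :=
  max_zero_sub_max_neg_zero_eq_self _

lemma support_xiPos (ξ : Ω → ℝ) : Function.support (xiPos ξ) = {ω | 0 < ξ ω} := by
  ext ω
  simp only [Function.mem_support, Set.mem_setOf_eq, xiPos]
  constructor
  · intro h
    by_contra hc
    push_neg at hc
    exact h (max_eq_right hc)
  · intro h
    rw [max_eq_left h.le]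
    exact h.ne'

section Meas
variable [MeasurableSpace Ω]

lemma xiPos_meas (hmeas : Measurable ξ) : Measurable (xiPos ξ) :=
  hmeas.max measurable_const
lemma xiNeg_meas (hmeas : Measurable ξ) : Measurable (xiNeg ξ) :=
  hmeas.neg.max measurable_const

lemma measurableSet_neg (hmeas : Measurable ξ) : MeasurableSet {ω | ξ ω ≤ 0} :=
  hmeas measurableSet_Iic

lemma measurableSet_pos (hmeas : Measurable ξ) : MeasurableSet {ω | 0 < ξ ω} :=
  hmeas measurableSet_Ioi

lemma kern_meas (hmeas : Measurable ξ) {S : Set Ω} (hS : MeasurableSet S) :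
    Measurable (kern ξ S) := by
  unfold kern
  have h1 : Measurable fun p : Ω × Ω => Set.indicator S (fun _ => (1 : ℝ)) p.1 :=
    (measurable_const.indicator hS).comp measurable_fst
  have h2 : Measurable fun p : Ω × Ω => Set.indicator S (fun _ => (1 : ℝ)) p.2 :=
    (measurable_const.indicator hS).comp measurable_snd
  have hP : Measurable fun p : Ω × Ω => xiPos ξ p.2 := (xiPos_meas hmeas).comp measurable_snd
  have hN : Measurable fun p : Ω × Ω => xiNeg ξ p.1 := (xiNeg_meas hmeas).comp measurable_fst
  exact (h1.mul (hP.div (hN.add hP))).add (h2.mul (hN.div (hN.add hP)))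

lemma ae_prodMeas (P : Measure Ω) [IsFiniteMeasure P] (hmeas : Measurable ξ) :
    ∀ᵐ p ∂(prodMeas P ξ), ξ p.1 ≤ 0 ∧ 0 < ξ p.2 := by
  rw [prodMeas, Measure.prod_restrict]
  filter_upwards [ae_restrict_mem ((measurableSet_neg hmeas).prod (measurableSet_pos hmeas))]
    with p hp
  exact ⟨hp.1, hp.2⟩
end Meas

lemma indicator_one_nonneg (S : Set Ω) (x : Ω) : 0 ≤ Set.indicator S (fun _ => (1 : ℝ)) x := by
  by_cases h : x ∈ S <;> simp [h]

lemma indicator_one_le_one (S : Set Ω) (x : Ω) : Set.indicator S (fun _ => (1 : ℝ)) x ≤ 1 := by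
  by_cases h : x ∈ S <;> simp [h]

lemma kern_nonneg (ξ : Ω → ℝ) (S : Set Ω) (p : Ω × Ω) : 0 ≤ kern ξ S p := by
  unfold kern
  have h1 := xiPos_nonneg ξ p.2
  have h2 := xiNeg_nonneg ξ p.1
  have h3 := indicator_one_nonneg S p.1
  have h4 := indicator_one_nonneg S p.2
  have h5 : (0:ℝ) ≤ xiNeg ξ p.1 + xiPos ξ p.2 := by linarith
  have := mul_nonneg h3 (div_nonneg h1 h5)
  have := mul_nonneg h4 (div_nonneg h2 h5)
  linarith

lemma kern_le_one (ξ : Ω → ℝ) (S : Set Ω) (p : Ω × Ω) : kern ξ S p ≤ 1 := by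
  unfold kern
  set a := xiNeg ξ p.1 with ha
  set b := xiPos ξ p.2 with hb
  have ha0 : 0 ≤ a := xiNeg_nonneg ξ p.1
  have hb0 : 0 ≤ b := xiPos_nonneg ξ p.2
  have h1 : Set.indicator S (fun _ => (1 : ℝ)) p.1 * (b / (a + b)) ≤ b / (a + b) :=
    mul_le_of_le_one_left (div_nonneg hb0 (by linarith)) (indicator_one_le_one S p.1)
  have h2 : Set.indicator S (fun _ => (1 : ℝ)) p.2 * (a / (a + b)) ≤ a / (a + b) :=
    mul_le_of_le_one_left (div_nonneg ha0 (by linarith)) (indicator_one_le_one S p.2)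
  have h3 : b / (a + b) + a / (a + b) ≤ 1 := by
    rcases eq_or_lt_of_le (add_nonneg ha0 hb0) with h | h
    · simp [← h]
    · rw [← add_div]
      rw [div_le_one h]
      linarith
  linarith

lemma key_alg (a b u v w : ℝ) (ha : 0 ≤ a) (hb : 0 ≤ b) :
    w * (a + b) * (u * (b / (a + b)) + v * (a / (a + b))) = w * (u * b + v * a) := by
  rcases eq_or_lt_of_le (add_nonneg ha hb) with h | h
  · have ha0 : a = 0 := by linarith
    have hb0 : b = 0 := by linarith
    simp [ha0, hb0]
  · field_simp

end Aux

lemma key_rep (a b x y u v c' : ℝ) (ha : 0 ≤ a) (hb : 0 ≤ b) :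
    (x * y * (a + b) / c') * (u * (b / (a + b)) + v * (a / (a + b))) =
      (u * x) * (y * b / c') + (x * a / c') * (v * y) := by
  rcases eq_or_lt_of_le (add_nonneg ha hb) with h | h
  · have ha0 : a = 0 := by linarith
    have hb0 : b = 0 := by linarith
    simp [ha0, hb0]
  · by_cases hc' : c' = 0
    · simp [hc']
    · field_simp

lemma key_int (a b x y c' : ℝ) (ha : 0 ≤ a) (hb : 0 ≤ b) :
    (x * y * (a + b) / c') * (a * b / (a + b)) = (x * a) * (y * b / c') := by
  rcases eq_or_lt_of_le (add_nonneg ha hb) with h | h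
  · have ha0 : a = 0 := by linarith
    have hb0 : b = 0 := by linarith
    simp [ha0, hb0]
  · by_cases hc' : c' = 0
    · simp [hc']
    · field_simp


lemma forward {Ω : Type*} [MeasurableSpace Ω] (P Q : Measure Ω)
    [IsProbabilityMeasure P] [IsProbabilityMeasure Q]
    (ξ : Ω → ℝ) (hmeas : Measurable ξ) (hint : Integrable ξ P)
    (h1 : 0 < P {ω | 0 < ξ ω})
    (hQP : Q ≪ P) (hPQ : P ≪ Q) (hintQ : Integrable ξ Q)
    (hQ0 : ∫ ω, ξ ω ∂Q = 0) :
    ∃ α : Ω × Ω → ℝ, GoodAlpha P ξ α ∧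
      ∀ S : Set Ω, MeasurableSet S →
        (Q S).toReal = ∫ p, α p * kern ξ S p ∂(prodMeas P ξ) := by
  set s1 : Set Ω := {ω | ξ ω ≤ 0} with hs1def
  set s2 : Set Ω := {ω | 0 < ξ ω} with hs2def
  have hs1 : MeasurableSet s1 := measurableSet_neg hmeas
  have hs2 : MeasurableSet s2 := measurableSet_pos hmeas
  have hprod : prodMeas P ξ = (P.restrict s1).prod (P.restrict s2) := rfl
  set g : Ω → ℝ := fun ω => (Q.rnDeriv P ω).toReal with hgdef
  have hgm : Measurable g := (Measure.measurable_rnDeriv Q P).ennreal_toReal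
  have hg0 : ∀ ω, 0 ≤ g ω := fun ω => ENNReal.toReal_nonneg
  have hgpos : ∀ᵐ ω ∂P, 0 < g ω := by
    filter_upwards [(Measure.rnDeriv_pos hQP).filter_mono hPQ.ae_le,
      Measure.rnDeriv_lt_top Q P] with ω hω1 hω2
    exact ENNReal.toReal_pos hω1.ne' hω2.ne
  have hmul_int : ∀ {f : Ω → ℝ}, Integrable f Q → Integrable (fun ω => g ω * f ω) P := by
    intro f hf
    have := (MeasureTheory.integrable_rnDeriv_smul_iff hQP).2 hf
    simpa [smul_eq_mul] using this
  have hmul_eq : ∀ (f : Ω → ℝ), ∫ ω, g ω * f ω ∂P = ∫ ω, f ω ∂Q := by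
    intro f
    have := MeasureTheory.integral_rnDeriv_smul hQP (f := f)
    simpa [smul_eq_mul] using this
  set c : ℝ := ∫ ω, xiPos ξ ω ∂Q with hcdef
  have hintPosQ : Integrable (xiPos ξ) Q := hintQ.pos_part
  have hintNegQ : Integrable (xiNeg ξ) Q := hintQ.neg_part
  have hQs2 : 0 < Q s2 := by
    rw [pos_iff_ne_zero]
    intro h
    exact absurd (hPQ h) h1.ne'
  have hc : 0 < c := by
    rw [hcdef, integral_pos_iff_support_of_nonneg (fun ω => xiPos_nonneg ξ ω) hintPosQ,
      support_xiPos]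
    exact hQs2
  have hcneg : ∫ ω, xiNeg ξ ω ∂Q = c := by
    have h := integral_sub hintPosQ hintNegQ
    have h2 : ∫ ω, (xiPos ξ ω - xiNeg ξ ω) ∂Q = ∫ ω, ξ ω ∂Q :=
      integral_congr_ae (Eventually.of_forall fun ω => xiPos_sub_xiNeg ξ ω)
    rw [h, hQ0] at h2
    linarith
  have IgN : Integrable (fun ω => g ω * xiNeg ξ ω) P := hmul_int hintNegQ
  have IgP : Integrable (fun ω => g ω * xiPos ξ ω) P := hmul_int hintPosQ
  have Ig : Integrable g P := Measure.integrable_toReal_rnDeriv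
  have EgN : ∫ ω in s1, g ω * xiNeg ξ ω ∂P = c := by
    rw [setIntegral_eq_integral_of_forall_compl_eq_zero, hmul_eq, hcneg]
    intro ω hω
    simp only [hs1def, Set.mem_setOf_eq, not_le] at hω
    rw [xiNeg_of_pos hω, mul_zero]
  have EgP : ∫ ω in s2, g ω * xiPos ξ ω ∂P = c := by
    rw [setIntegral_eq_integral_of_forall_compl_eq_zero, hmul_eq, hcdef]
    intro ω hω
    simp only [hs2def, Set.mem_setOf_eq, not_lt] at hω
    rw [xiPos_of_nonpos hω, mul_zero]
  have Eg1 : ∫ ω in s1, g ω ∂P = (Q s1).toReal := Measure.setIntegral_toReal_rnDeriv hQP s1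
  have Eg2 : ∫ ω in s2, g ω ∂P = (Q s2).toReal := Measure.setIntegral_toReal_rnDeriv hQP s2
  have hindeq : ∀ S : Set Ω, (fun ω => Set.indicator S (fun _ => (1 : ℝ)) ω * g ω)
      = Set.indicator S g := by
    intro S
    funext ω
    by_cases h : ω ∈ S <;> simp [h]
  have EgS : ∀ (S : Set Ω), MeasurableSet S → ∀ (t : Set Ω), MeasurableSet t →
      ∫ ω in t, Set.indicator S (fun _ => (1 : ℝ)) ω * g ω ∂P = (Q (S ∩ t)).toReal := by
    intro S hS t ht
    rw [hindeq S, integral_indicator hS, Measure.restrict_restrict hS]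
    exact Measure.setIntegral_toReal_rnDeriv hQP _
  set α : Ω × Ω → ℝ := fun p => g p.1 * g p.2 * (xiNeg ξ p.1 + xiPos ξ p.2) / c with hαdef
  have hαm : Measurable α := by
    apply Measurable.div_const
    exact ((hgm.comp measurable_fst).mul (hgm.comp measurable_snd)).mul
      (((xiNeg_meas hmeas).comp measurable_fst).add ((xiPos_meas hmeas).comp measurable_snd))
  have hα0 : ∀ p, 0 ≤ α p := by
    intro p
    apply div_nonneg _ hc.le
    exact mul_nonneg (mul_nonneg (hg0 _) (hg0 _))
      (add_nonneg (xiNeg_nonneg ξ _) (xiPos_nonneg ξ _))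
  refine ⟨α, ⟨hαm, hα0, ?_, ?_, ?_⟩, ?_⟩
  · -- support condition
    set A : Set Ω := {ω | 0 < g ω} with hAdef
    have hA : MeasurableSet A := measurableSet_lt measurable_const hgm
    have hae : {p : Ω × Ω | 0 < α p} =ᶠ[ae (prodMeas P ξ)] (A ×ˢ A) := by
      rw [eventuallyEq_set]
      filter_upwards [ae_prodMeas P hmeas] with p hp
      have hb : 0 < xiPos ξ p.2 := by rw [xiPos_of_pos hp.2]; exact hp.2
      have ha := xiNeg_nonneg ξ p.1
      simp only [Set.mem_setOf_eq, Set.mem_prod, hAdef]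
      constructor
      · intro h
        constructor
        · rcases (hg0 p.1).eq_or_lt with h' | h'
          · exfalso
            rw [hαdef] at h
            simp only [← h', zero_mul, mul_zero, zero_div, zero_mul] at h
            exact lt_irrefl 0 h
          · exact h'
        · rcases (hg0 p.2).eq_or_lt with h' | h'
          · exfalso
            rw [hαdef] at h
            simp only [← h', zero_mul, mul_zero, zero_div] at h
            exact lt_irrefl 0 h
          · exact h'
      · rintro ⟨h1', h2'⟩
        exact div_pos (mul_pos (mul_pos h1' h2') (by linarith)) hc
    rw [measure_congr hae, hprod, Measure.prod_prod, Measure.restrict_apply hA,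
      Measure.restrict_apply hA]
    have e1 : P (A ∩ s1) = P s1 := by
      apply measure_congr
      rw [eventuallyEq_set]
      filter_upwards [hgpos] with ω hω
      simp [Set.mem_inter_iff, hAdef, hω]
    have e2 : P (A ∩ s2) = P s2 := by
      apply measure_congr
      rw [eventuallyEq_set]
      filter_upwards [hgpos] with ω hω
      simp [Set.mem_inter_iff, hAdef, hω]
    rw [e1, e2, mul_comm]
  · -- integrability condition
    have hfun : (fun p : Ω × Ω => α p * (xiNeg ξ p.1 * xiPos ξ p.2 /
        (xiNeg ξ p.1 + xiPos ξ p.2)))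
        = fun p : Ω × Ω => (g p.1 * xiNeg ξ p.1) * (g p.2 * xiPos ξ p.2 / c) := by
      funext p
      exact key_int _ _ _ _ _ (xiNeg_nonneg ξ p.1) (xiPos_nonneg ξ p.2)
    rw [hfun, hprod]
    exact (IgN.restrict).mul_prod ((IgP.restrict).div_const c)
  · -- total mass 1
    have hsplit : α = fun p : Ω × Ω =>
        (g p.1 * xiNeg ξ p.1) * (g p.2 / c) + g p.1 * (g p.2 * xiPos ξ p.2 / c) := by
      funext p
      rw [hαdef]
      ring
    rw [hsplit, hprod, integral_add ((IgN.restrict).mul_prod ((Ig.restrict).div_const c))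
      ((Ig.restrict).mul_prod ((IgP.restrict).div_const c)),
      integral_prod_mul (fun ω => g ω * xiNeg ξ ω) (fun ω => g ω / c),
      integral_prod_mul (fun ω => g ω) (fun ω => g ω * xiPos ξ ω / c),
      integral_div, integral_div, EgN, EgP, Eg1, Eg2]
    have hQ12 : (Q s1).toReal + (Q s2).toReal = 1 := by
      have hcompl : s1ᶜ = s2 := by
        ext ω
        simp [hs1def, hs2def, not_le]
      have h := measure_add_measure_compl (μ := Q) hs1
      rw [hcompl] at h
      rw [← ENNReal.toReal_add (measure_ne_top Q s1) (measure_ne_top Q s2), h]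
      simp
    field_simp
    linarith
  · -- representation
    intro S hS
    have hfun : (fun p : Ω × Ω => α p * kern ξ S p)
        = fun p : Ω × Ω => (Set.indicator S (fun _ => (1 : ℝ)) p.1 * g p.1) *
            (g p.2 * xiPos ξ p.2 / c) +
          (g p.1 * xiNeg ξ p.1 / c) * (Set.indicator S (fun _ => (1 : ℝ)) p.2 * g p.2) := by
      funext p
      rw [hαdef]
      unfold kern
      have := key_rep (xiNeg ξ p.1) (xiPos ξ p.2) (g p.1) (g p.2)
        (Set.indicator S (fun _ => (1 : ℝ)) p.1) (Set.indicator S (fun _ => (1 : ℝ)) p.2) c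
        (xiNeg_nonneg ξ p.1) (xiPos_nonneg ξ p.2)
      rw [this]
    have I1 : Integrable (fun ω => Set.indicator S (fun _ => (1 : ℝ)) ω * g ω)
        (P.restrict s1) := by
      rw [hindeq S]
      exact (Ig.restrict).indicator hS
    have I2 : Integrable (fun ω => Set.indicator S (fun _ => (1 : ℝ)) ω * g ω)
        (P.restrict s2) := by
      rw [hindeq S]
      exact (Ig.restrict).indicator hS
    rw [hfun, hprod, integral_add (I1.mul_prod ((IgP.restrict).div_const c))
      (((IgN.restrict).div_const c).mul_prod I2),
      integral_prod_mul (fun ω => Set.indicator S (fun _ => (1 : ℝ)) ω * g ω)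
        (fun ω => g ω * xiPos ξ ω / c),
      integral_prod_mul (fun ω => g ω * xiNeg ξ ω / c)
        (fun ω => Set.indicator S (fun _ => (1 : ℝ)) ω * g ω),
      integral_div, integral_div,
      EgP, EgN, EgS S hS s1 hs1, EgS S hS s2 hs2]
    have hsum : Q (S ∩ s1) + Q (S ∩ s2) = Q S := by
      have h := measure_inter_add_diff (μ := Q) S hs1
      have hd : S \ s1 = S ∩ s2 := by
        ext ω
        simp [hs1def, hs2def, Set.mem_diff, not_le]
      rwa [hd] at h
    rw [← hsum, ENNReal.toReal_add (measure_ne_top Q _) (measure_ne_top Q _)]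
    field_simp

lemma reverse_dir {Ω : Type*} [MeasurableSpace Ω] (P Q : Measure Ω)
    [IsProbabilityMeasure P] [IsProbabilityMeasure Q]
    (ξ : Ω → ℝ) (hmeas : Measurable ξ) (hintQ : Integrable ξ Q)
    (α : Ω × Ω → ℝ) (hαm : Measurable α) (hα0 : ∀ p, 0 ≤ α p)
    (hαone : ∫ p, α p ∂(prodMeas P ξ) = 1)
    (hrep : ∀ S : Set Ω, MeasurableSet S →
      (Q S).toReal = ∫ p, α p * kern ξ S p ∂(prodMeas P ξ)) :
    ∫ ω, ξ ω ∂Q = 0 := by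
  set μ := prodMeas P ξ with hμdef
  have hαint : Integrable α μ := by
    by_contra h
    rw [integral_undef h] at hαone
    norm_num at hαone
  set r₁ : Ω × Ω → ℝ := fun p => α p * (xiPos ξ p.2 / (xiNeg ξ p.1 + xiPos ξ p.2)) with hr₁def
  set r₂ : Ω × Ω → ℝ := fun p => α p * (xiNeg ξ p.1 / (xiNeg ξ p.1 + xiPos ξ p.2)) with hr₂def
  have hPm : Measurable fun p : Ω × Ω => xiPos ξ p.2 := (xiPos_meas hmeas).comp measurable_snd
  have hNm : Measurable fun p : Ω × Ω => xiNeg ξ p.1 := (xiNeg_meas hmeas).comp measurable_fst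
  have hr₁m : Measurable r₁ := hαm.mul (hPm.div (hNm.add hPm))
  have hr₂m : Measurable r₂ := hαm.mul (hNm.div (hNm.add hPm))
  have hr₁0 : ∀ p, 0 ≤ r₁ p := fun p => mul_nonneg (hα0 p)
    (div_nonneg (xiPos_nonneg ξ _) (add_nonneg (xiNeg_nonneg ξ _) (xiPos_nonneg ξ _)))
  have hr₂0 : ∀ p, 0 ≤ r₂ p := fun p => mul_nonneg (hα0 p)
    (div_nonneg (xiNeg_nonneg ξ _) (add_nonneg (xiNeg_nonneg ξ _) (xiPos_nonneg ξ _)))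
  set F₁ : Ω × Ω → ℝ≥0∞ := fun p => ((r₁ p).toNNReal : ℝ≥0∞) with hF₁def
  set F₂ : Ω × Ω → ℝ≥0∞ := fun p => ((r₂ p).toNNReal : ℝ≥0∞) with hF₂def
  have hF₁m : Measurable F₁ := hr₁m.real_toNNReal.coe_nnreal_ennreal
  have hF₂m : Measurable F₂ := hr₂m.real_toNNReal.coe_nnreal_ennreal
  set ν₁ : Measure Ω := (μ.withDensity F₁).map Prod.fst with hν₁def
  set ν₂ : Measure Ω := (μ.withDensity F₂).map Prod.snd with hν₂def
  have hQeq : Q = ν₁ + ν₂ := by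
    ext S hS
    have hk_int : Integrable (fun p => α p * kern ξ S p) μ := by
      apply hαint.mono ((hαm.mul (kern_meas hmeas hS)).aestronglyMeasurable)
      filter_upwards with p
      rw [Real.norm_eq_abs, Real.norm_eq_abs, Pi.mul_apply,
        abs_of_nonneg (mul_nonneg (hα0 p) (kern_nonneg ξ S p)), abs_of_nonneg (hα0 p)]
      calc α p * kern ξ S p ≤ α p * 1 :=
            mul_le_mul_of_nonneg_left (kern_le_one ξ S p) (hα0 p)
        _ = α p := mul_one _
    have key : ∀ p : Ω × Ω, (Prod.fst ⁻¹' S : Set (Ω × Ω)).indicator F₁ p +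
        (Prod.snd ⁻¹' S : Set (Ω × Ω)).indicator F₂ p
        = ENNReal.ofReal (α p * kern ξ S p) := by
      intro p
      have hker : α p * kern ξ S p =
          Set.indicator S (fun _ => (1 : ℝ)) p.1 * r₁ p +
          Set.indicator S (fun _ => (1 : ℝ)) p.2 * r₂ p := by
        unfold kern
        rw [hr₁def, hr₂def]
        ring
      rw [hker]
      by_cases h1 : p.1 ∈ S <;> by_cases h2 : p.2 ∈ S <;>
        simp [Set.indicator_of_mem, Set.indicator_of_notMem, h1, h2, hF₁def, hF₂def,
          ENNReal.ofReal_add, hr₁0 p, hr₂0 p, ENNReal.ofReal,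
          Set.mem_preimage]
    calc Q S = ENNReal.ofReal ((Q S).toReal) := (ENNReal.ofReal_toReal (measure_ne_top Q S)).symm
      _ = ENNReal.ofReal (∫ p, α p * kern ξ S p ∂μ) := by rw [hrep S hS]
      _ = ∫⁻ p, ENNReal.ofReal (α p * kern ξ S p) ∂μ :=
          ofReal_integral_eq_lintegral_ofReal hk_int
            (ae_of_all _ fun p => mul_nonneg (hα0 p) (kern_nonneg ξ S p))
      _ = ∫⁻ p, ((Prod.fst ⁻¹' S : Set (Ω × Ω)).indicator F₁ p +
            (Prod.snd ⁻¹' S : Set (Ω × Ω)).indicator F₂ p) ∂μ := by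
          refine lintegral_congr fun p => ?_
          rw [key p]
      _ = ∫⁻ p in Prod.fst ⁻¹' S, F₁ p ∂μ + ∫⁻ p in Prod.snd ⁻¹' S, F₂ p ∂μ := by
          rw [lintegral_add_left (hF₁m.indicator (measurable_fst hS)),
            lintegral_indicator (measurable_fst hS) F₁, lintegral_indicator (measurable_snd hS) F₂]
      _ = (ν₁ + ν₂) S := by
          rw [Measure.add_apply, hν₁def, hν₂def,
            Measure.map_apply measurable_fst hS, Measure.map_apply measurable_snd hS,
            withDensity_apply _ (measurable_fst hS), withDensity_apply _ (measurable_snd hS)]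
  have hi : Integrable ξ ν₁ ∧ Integrable ξ ν₂ := by
    rw [hQeq] at hintQ
    exact integrable_add_measure.mp hintQ
  have E₁ : ∫ ω, ξ ω ∂ν₁ = ∫ p, r₁ p * ξ p.1 ∂μ := by
    rw [hν₁def, integral_map measurable_fst.aemeasurable hmeas.aestronglyMeasurable,
      integral_withDensity_eq_integral_smul hr₁m.real_toNNReal (fun p => ξ p.1)]
    refine integral_congr_ae (ae_of_all _ fun p => ?_)
    simp only [NNReal.smul_def, Real.coe_toNNReal _ (hr₁0 p), smul_eq_mul]
  have E₂ : ∫ ω, ξ ω ∂ν₂ = ∫ p, r₂ p * ξ p.2 ∂μ := by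
    rw [hν₂def, integral_map measurable_snd.aemeasurable hmeas.aestronglyMeasurable,
      integral_withDensity_eq_integral_smul hr₂m.real_toNNReal (fun p => ξ p.2)]
    refine integral_congr_ae (ae_of_all _ fun p => ?_)
    simp only [NNReal.smul_def, Real.coe_toNNReal _ (hr₂0 p), smul_eq_mul]
  have hae : (fun p => r₁ p * ξ p.1) =ᵐ[μ] fun p => -(r₂ p * ξ p.2) := by
    filter_upwards [ae_prodMeas P hmeas] with p hp
    have h1 : ξ p.1 = -(xiNeg ξ p.1) := by rw [xiNeg_of_nonpos hp.1]; ring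
    have h2 : ξ p.2 = xiPos ξ p.2 := (xiPos_of_pos hp.2).symm
    rw [hr₁def, hr₂def, h1, h2]
    ring
  rw [hQeq, integral_add_measure hi.1 hi.2, E₁, E₂, integral_congr_ae hae, integral_neg]
  ring

theorem stmt7 {Ω : Type*} [MeasurableSpace Ω] (P Q : Measure Ω)
    [IsProbabilityMeasure P] [IsProbabilityMeasure Q]
    (ξ : Ω → ℝ) (hmeas : Measurable ξ) (hint : Integrable ξ P)
    (h1 : 0 < P {ω | 0 < ξ ω}) (h2 : P {ω | 0 < ξ ω} < 1) (h3 : 0 < P {ω | ξ ω < 0})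
    (hQP : Q ≪ P) (hPQ : P ≪ Q) (hintQ : Integrable ξ Q) :
    (∫ ω, ξ ω ∂Q = 0) ↔
      ∃ α : Ω × Ω → ℝ, GoodAlpha P ξ α ∧
        ∀ S : Set Ω, MeasurableSet S →
          (Q S).toReal = ∫ p, α p * kern ξ S p ∂(prodMeas P ξ) := by
  constructor
  · intro h
    exact forward P Q ξ hmeas hint h1 hQP hPQ hintQ h
  · rintro ⟨α, ⟨hαm, hα0, -, -, hαone⟩, hrep⟩
    exact reverse_dir P Q ξ hmeas hintQ α hαm hα0 hαone hrep
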